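/- The function m(x) = 2β·K₀(2e^{-x/(2β)}) converges pointwise to max(x, 0) as β → 0⁺, for every fixed x ∈ ℝ. -/

import Mathlib

open MeasureTheory Filter

/-- Modified Bessel function of the second kind of order zero,
K₀(z) = ∫₀^∞ exp(-z cosh u) du. -/
noncomputable def besselK0 (z : ℝ) : ℝ :=
  ∫ u in Set.Ioi (0 : ℝ), Real.exp (-z * Real.cosh u)

open Set

noncomputable def gvthF (x β t : ℝ) : ℝ :=
  Real.exp (-(Real.exp ((t - x) / (2 * β)) + Real.exp (-(t + x) / (2 * β))))

lemma gvth_div_atTop {c : ℝ} (hc : 0 < c) :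
    Tendsto (fun β : ℝ => c / (2*β)) (nhdsWithin 0 (Ioi 0)) atTop := by
  have h0 : Tendsto (fun β : ℝ => 2*β) (nhdsWithin 0 (Ioi 0)) (nhdsWithin 0 (Ioi 0)) := by
    rw [tendsto_nhdsWithin_iff]
    constructor
    · exact ((continuous_const.mul continuous_id).tendsto' 0 0 (by norm_num)).mono_left
        nhdsWithin_le_nhds
    · exact eventually_mem_nhdsWithin.mono fun β hβ => by simpa using mul_pos two_pos (show (0:ℝ) < β from hβ)
  have h1 : Tendsto (fun β : ℝ => (2*β)⁻¹) (nhdsWithin 0 (Ioi 0)) atTop :=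
    tendsto_inv_nhdsGT_zero.comp h0
  simpa [div_eq_mul_inv] using h1.const_mul_atTop hc

lemma gvth_div_atBot {c : ℝ} (hc : c < 0) :
    Tendsto (fun β : ℝ => c / (2*β)) (nhdsWithin 0 (Ioi 0)) atBot := by
  have h := tendsto_neg_atTop_atBot.comp (gvth_div_atTop (neg_pos.2 hc))
  simpa [Function.comp_def, neg_div] using h

lemma gvth_changevar (x : ℝ) {β : ℝ} (hβ : 0 < β) :
    (∫ u in Ioi (0:ℝ), Real.exp (-(2 * Real.exp (-x / (2 * β))) * Real.cosh u))
      = (2*β)⁻¹ • ∫ t in Ioi (0:ℝ), gvthF x β t := by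
  rw [show Ioi (0:ℝ) = Ioi (2*β*0) by norm_num,
    ← integral_comp_mul_left_Ioi (gvthF x β) 0 (by positivity : (0:ℝ) < 2*β),
    show (2*β*0 : ℝ) = 0 by ring]
  refine setIntegral_congr_fun measurableSet_Ioi fun u hu => ?_
  unfold gvthF
  have h1 : (2*β*u - x)/(2*β) = u + (-x/(2*β)) := by field_simp; ring
  have h2 : (-(2*β*u + x))/(2*β) = -u + (-x/(2*β)) := by field_simp; ring
  rw [h1, h2, Real.exp_add, Real.exp_add, Real.cosh_eq]
  ring_nf

/-- m(x) = 2β·K₀(2e^{-x/(2β)}) converges pointwise to max(x, 0) as β → 0⁺. -/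
theorem gumbel_volume_tendsto_hinge (x : ℝ) :
    Tendsto (fun β : ℝ => 2 * β * besselK0 (2 * Real.exp (-x / (2 * β))))
      (nhdsWithin 0 (Set.Ioi 0)) (nhds (max x 0)) := by
  set l := nhdsWithin (0:ℝ) (Ioi 0) with hl
  set F : ℝ → ℝ := (Ioo 0 x).indicator (fun _ => (1:ℝ)) with hF
  -- value of limit integral
  have hFval : (∫ t in Ioi (0:ℝ), F t) = max x 0 := by
    rw [hF, integral_indicator measurableSet_Ioo,
      Measure.restrict_restrict measurableSet_Ioo,
      show (Ioo 0 x ∩ Ioi 0) = Ioo 0 x from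
        inter_eq_self_of_subset_left fun t ht => ht.1,
      setIntegral_const, Real.volume_real_Ioo, smul_eq_mul, mul_one, sub_zero]
  -- dominated convergence
  have key : Tendsto (fun β => ∫ t in Ioi (0:ℝ), gvthF x β t) l
      (nhds (∫ t in Ioi (0:ℝ), F t)) := by
    apply tendsto_integral_filter_of_dominated_convergence
      (bound := fun t => Real.exp 1 * Real.exp (-Real.exp (t - x)))
    · -- measurability
      filter_upwards with β
      exact Continuous.aestronglyMeasurable (by unfold gvthF; fun_prop)
    · -- uniform bound for small β
      have hmem : Ioo (0:ℝ) (1/2) ∈ l := Ioo_mem_nhdsGT_of_mem (by norm_num)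
      filter_upwards [hmem] with β hβ
      filter_upwards [ae_restrict_mem measurableSet_Ioi] with t ht
      obtain ⟨hβ0, hβh⟩ := hβ
      unfold gvthF
      rw [Real.norm_eq_abs, abs_of_nonneg (Real.exp_nonneg _)]
      rcases le_or_gt t x with htx | htx
      · -- t ≤ x : bound by 1 ≤ exp 1 * exp(-exp(t-x))
        have h1 : Real.exp (-(Real.exp ((t - x) / (2 * β)) + Real.exp (-(t + x) / (2 * β)))) ≤ 1 := by
          rw [Real.exp_le_one_iff]
          have := Real.exp_pos ((t - x) / (2 * β))
          have := Real.exp_pos ((-(t + x)) / (2 * β))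
          linarith
        have h2 : (1:ℝ) ≤ Real.exp 1 * Real.exp (-Real.exp (t - x)) := by
          rw [← Real.exp_add, Real.one_le_exp_iff]
          have : Real.exp (t - x) ≤ 1 := by
            rw [Real.exp_le_one_iff]; linarith
          linarith
        linarith
      · -- x < t
        have hb1 : Real.exp (-(Real.exp ((t - x) / (2 * β)) + Real.exp (-(t + x) / (2 * β))))
            ≤ Real.exp (-(Real.exp ((t - x) / (2 * β)))) := by
          apply Real.exp_le_exp.2
          have := Real.exp_pos ((-(t + x)) / (2 * β))
          linarith
        have hb2 : Real.exp (-(Real.exp ((t - x) / (2 * β)))) ≤ Real.exp (-Real.exp (t - x)) := by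
          apply Real.exp_le_exp.2
          have : t - x ≤ (t - x) / (2 * β) :=
            le_div_self (by linarith) (by linarith) (by linarith)
          have := Real.exp_le_exp.2 this
          linarith
        have hb3 : Real.exp (-Real.exp (t - x)) ≤ Real.exp 1 * Real.exp (-Real.exp (t - x)) := by
          nlinarith [Real.exp_pos (-Real.exp (t - x)), Real.one_le_exp (le_of_lt one_pos)]
        linarith
    · -- integrability of bound
      have hint : IntegrableOn (fun t : ℝ => Real.exp 1 * Real.exp x * Real.exp (-(1:ℝ) * t))
          (Ioi (0:ℝ)) := (exp_neg_integrableOn_Ioi 0 one_pos).const_mul _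
      refine Integrable.mono' hint (Continuous.aestronglyMeasurable (by fun_prop)) ?_
      filter_upwards with t
      rw [Real.norm_eq_abs, abs_of_nonneg (by positivity)]
      have h1 : -Real.exp (t - x) ≤ x - t := by
        have := Real.add_one_le_exp (t - x)
        linarith
      calc Real.exp 1 * Real.exp (-Real.exp (t - x))
          ≤ Real.exp 1 * Real.exp (x - t) :=
            mul_le_mul_of_nonneg_left (Real.exp_le_exp.2 h1) (Real.exp_nonneg 1)
        _ = Real.exp 1 * Real.exp x * Real.exp (-(1:ℝ)*t) := by
            rw [← Real.exp_add, ← Real.exp_add, ← Real.exp_add]; congr 1; ring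
    · -- a.e. pointwise convergence
      have hne : ∀ᵐ t ∂(volume.restrict (Ioi (0:ℝ))), t ≠ x := by
        refine ae_restrict_of_ae (ae_iff.2 ?_)
        simp [measure_singleton]
      filter_upwards [ae_restrict_mem measurableSet_Ioi, hne] with t ht htne
      rcases lt_or_gt_of_ne htne with htx | htx
      · -- t < x, F t = 1
        have hx0 : (0:ℝ) < x := lt_trans ht htx
        have hA : Tendsto (fun β => Real.exp ((t - x) / (2*β))) l (nhds 0) :=
          Real.tendsto_exp_atBot.comp (gvth_div_atBot (by linarith))
        have hB : Tendsto (fun β => Real.exp ((-(t + x)) / (2*β))) l (nhds 0) :=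
          Real.tendsto_exp_atBot.comp (gvth_div_atBot (by linarith [mem_Ioi.mp ht]))
        have hsum : Tendsto (fun β => -(Real.exp ((t - x) / (2*β)) +
            Real.exp ((-(t + x)) / (2*β)))) l (nhds 0) := by
          have := (hA.add hB).neg
          simpa using this
        have := (Real.continuous_exp.tendsto 0).comp hsum
        simp only [Real.exp_zero] at this
        have hFt : F t = 1 :=
          indicator_of_mem (show t ∈ Ioo 0 x from ⟨mem_Ioi.mp ht, htx⟩) _
        rw [hFt]
        exact this
      · -- t > x, F t = 0
        have hFt : F t = 0 :=
          indicator_of_notMem (fun hm : t ∈ Ioo 0 x => absurd hm.2 (not_lt.2 htx.le)) _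
        rw [hFt]
        have hbig : Tendsto (fun β => Real.exp (-(Real.exp ((t - x) / (2*β))))) l (nhds 0) :=
          Real.tendsto_exp_atBot.comp (tendsto_neg_atTop_atBot.comp
            (Real.tendsto_exp_atTop.comp (gvth_div_atTop (by linarith))))
        refine squeeze_zero (fun β => Real.exp_nonneg _) (fun β => ?_) hbig
        unfold gvthF
        apply Real.exp_le_exp.2
        have := Real.exp_pos ((-(t + x)) / (2 * β))
        have h := Real.exp_pos (-(t + x) / (2 * β))
        linarith
  -- transfer back
  have heq : ∀ᶠ β in l, 2 * β * besselK0 (2 * Real.exp (-x / (2 * β)))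
      = ∫ t in Ioi (0:ℝ), gvthF x β t := by
    filter_upwards [self_mem_nhdsWithin] with β hβ
    have hβ : (0:ℝ) < β := hβ
    unfold besselK0
    rw [gvth_changevar x hβ, smul_eq_mul]
    field_simp
  rw [← hFval]
  exact key.congr' (heq.mono fun β h => h.symm)
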